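/- Let Q be a dyadic cube, w a weight, 1 < p < ∞, and suppose B^λ = ⊔_i Q_i^λ is a disjoint union of subcubes of Q each satisfying ⟨w⟩_{Q_i^λ} ≥ λ⟨w⟩_Q, and that ∫_{B^λ} w dμ ≥ (1/3)∫_Q w dμ and ⟨w⟩_{B^λ} ≤ Dλ⟨w⟩_Q. Then ∫_Q w^p dμ ≥ (1/(3D))·λ^{p-1}·μ(Q)·⟨w⟩_Q^p, and consequently ⟨w^p⟩_Q^{1/p} ≥ ((1/(3D))λ^{p-1})^{1/p}⟨w⟩_Q. -/

import Mathlib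

open MeasureTheory

/-- The average `⟨f⟩_S = (1/μ(S)) ∫_S f dμ`. -/
noncomputable def avg {X : Type*} [MeasurableSpace X] (μ : Measure X)
    (f : X → ℝ) (S : Set X) : ℝ :=
  (μ S).toReal⁻¹ * ∫ x in S, f x ∂μ

/-- avg rewrite: ∫_S f = μ(S).toReal * avg. -/
lemma integral_eq_avg {X : Type*} [MeasurableSpace X] (μ : Measure X)
    (f : X → ℝ) (S : Set X) (h0 : 0 < μ S) (hfin : μ S < ⊤) :
    ∫ x in S, f x ∂μ = (μ S).toReal * avg μ f S := by
  have h : (μ S).toReal ≠ 0 := by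
    simp [ENNReal.toReal_eq_zero_iff, h0.ne', hfin.ne]
  rw [avg, ← mul_assoc, mul_inv_cancel₀ h, one_mul]

/-- Jensen on a set of positive finite measure. -/
lemma avg_rpow_le {X : Type*} [MeasurableSpace X] (μ : Measure X)
    (w : X → ℝ) (hw : ∀ x, 0 ≤ w x) (p : ℝ) (hp : 1 < p)
    (S : Set X) (h0 : 0 < μ S) (hfin : μ S < ⊤)
    (hint : IntegrableOn w S μ) (hintp : IntegrableOn (fun x => w x ^ p) S μ) :
    (avg μ w S) ^ p ≤ avg μ (fun x => w x ^ p) S := by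
  have hfinm : IsFiniteMeasure (μ.restrict S) :=
    ⟨by rw [Measure.restrict_apply_univ]; exact hfin⟩
  have hne : NeZero (μ.restrict S) := by
    refine ⟨fun h => ?_⟩
    have := Measure.restrict_apply_univ (μ := μ) (s := S)
    rw [h] at this
    simp at this
    exact h0.ne' this.symm
  have hconv : ConvexOn ℝ (Set.Ici 0) fun x : ℝ => x ^ p := convexOn_rpow hp.le
  have hcont : ContinuousOn (fun x : ℝ => x ^ p) (Set.Ici 0) := fun x _ =>
    (Real.continuousAt_rpow_const x p (Or.inr (by linarith))).continuousWithinAt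
  have hjen := hconv.map_average_le (μ := μ.restrict S) (f := w) hcont isClosed_Ici
    (Filter.Eventually.of_forall fun x => hw x) hint hintp
  have havg : ∀ f : X → ℝ, ⨍ x, f x ∂(μ.restrict S) = avg μ f S := by
    intro f
    rw [average_eq, measureReal_restrict_apply_univ]; rfl
  rwa [havg, havg] at hjen

/-- Lower bound for `∫_Q w^p` from the big-average bad part `B^λ = ⊔ᵢ Qᵢ^λ`:
if `⟨w⟩_{Qᵢ^λ} ≥ λ⟨w⟩_Q` for each `i`, `∫_{B^λ} w ≥ (1/3)∫_Q w` and
`⟨w⟩_{B^λ} ≤ Dλ⟨w⟩_Q`, then `∫_Q w^p ≥ (1/(3D))λ^{p-1}μ(Q)⟨w⟩_Q^p`, hence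
`⟨w^p⟩_Q^{1/p} ≥ ((1/(3D))λ^{p-1})^{1/p}⟨w⟩_Q`. -/
theorem bad_part_lower_bound
    {X : Type*} [MeasurableSpace X] (μ : Measure X) (w : X → ℝ)
    (hw : ∀ x, 0 ≤ w x) (hwm : Measurable w)
    (p D l : ℝ) (hp : 1 < p) (hD : 1 ≤ D) (hl : 1 < l)
    (Q : Set X) (Qi : ℕ → Set X)
    (hmQ : MeasurableSet Q) (hmQi : ∀ i, MeasurableSet (Qi i))
    (hsub : ∀ i, Qi i ⊆ Q) (hdisj : Pairwise (Function.onFun Disjoint Qi))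
    (hposQ : 0 < μ Q) (hfinQ : μ Q < ⊤) (hposQi : ∀ i, 0 < μ (Qi i))
    (hintp : IntegrableOn (fun x => w x ^ p) Q μ)
    (hint : IntegrableOn w Q μ)
    (havgQi : ∀ i, avg μ w (Qi i) ≥ l * avg μ w Q)
    (hmass : (1 / 3) * ∫ x in Q, w x ∂μ ≤ ∫ x in ⋃ i, Qi i, w x ∂μ)
    (havgB : avg μ w (⋃ i, Qi i) ≤ D * l * avg μ w Q) :
    (1 / (3 * D)) * l ^ (p - 1) * (μ Q).toReal * (avg μ w Q) ^ p ≤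
        ∫ x in Q, w x ^ p ∂μ ∧
      ((1 / (3 * D)) * l ^ (p - 1)) ^ (1 / p) * avg μ w Q ≤
        (avg μ (fun x => w x ^ p) Q) ^ (1 / p) := by
  set B := ⋃ i, Qi i with hBdef
  set A := avg μ w Q with hAdef
  have hl0 : (0:ℝ) < l := by linarith
  have hD0 : (0:ℝ) < D := by linarith
  have hp0 : (0:ℝ) < p := by linarith
  have hmB : MeasurableSet B := MeasurableSet.iUnion hmQi
  have hBQ : B ⊆ Q := Set.iUnion_subset hsub
  have hμB_le : μ B ≤ μ Q := measure_mono hBQ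
  have hμB_lt : μ B < ⊤ := lt_of_le_of_lt hμB_le hfinQ
  have hμB_pos : 0 < μ B :=
    lt_of_lt_of_le (hposQi 0) (measure_mono (Set.subset_iUnion _ 0))
  have hμQi_lt : ∀ i, μ (Qi i) < ⊤ := fun i =>
    lt_of_le_of_lt (measure_mono (hsub i)) hfinQ
  have hintB : IntegrableOn w B μ := hint.mono_set hBQ
  have hintpB : IntegrableOn (fun x => w x ^ p) B μ := hintp.mono_set hBQ
  have hμQ0 : (0:ℝ) < (μ Q).toReal := ENNReal.toReal_pos hposQ.ne' hfinQ.ne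
  have hμB0 : (0:ℝ) < (μ B).toReal := ENNReal.toReal_pos hμB_pos.ne' hμB_lt.ne
  have hA0 : 0 ≤ A := by
    have : 0 ≤ ∫ x in Q, w x ∂μ := setIntegral_nonneg hmQ fun x _ => hw x
    have h2 : (0:ℝ) ≤ ((μ Q).toReal)⁻¹ := by positivity
    exact mul_nonneg h2 this
  have hwp_nonneg : ∀ x, 0 ≤ w x ^ p := fun x => Real.rpow_nonneg (hw x) p
  have hintQp_nonneg : 0 ≤ ∫ x in Q, w x ^ p ∂μ :=
    setIntegral_nonneg hmQ fun x _ => hwp_nonneg x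
  have havgQp_nonneg : 0 ≤ avg μ (fun x => w x ^ p) Q :=
    mul_nonneg (by positivity) hintQp_nonneg
  rcases eq_or_lt_of_le hA0 with hA | hA
  · constructor
    · rw [← hA, Real.zero_rpow hp0.ne', mul_zero]
      exact hintQp_nonneg
    · rw [← hA, mul_zero]
      exact Real.rpow_nonneg havgQp_nonneg _
  -- main case : A > 0
  -- Step 1 : sum of measures
  have hμB_sum : μ B = ∑' i, μ (Qi i) := measure_iUnion hdisj hmQi
  have hsumToReal : Summable (fun i => (μ (Qi i)).toReal) :=
    ENNReal.summable_toReal (by rw [← hμB_sum]; exact hμB_lt.ne)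
  have htsumToReal : ∑' i, (μ (Qi i)).toReal = (μ B).toReal := by
    rw [hμB_sum, ENNReal.tsum_toReal_eq fun i => (hμQi_lt i).ne]
  -- Step 2 : ∫_B w ≥ μ(B) l A
  have hBint_ge : (μ B).toReal * (l * A) ≤ ∫ x in B, w x ∂μ := by
    have hsum : HasSum (fun i => ∫ x in Qi i, w x ∂μ) (∫ x in B, w x ∂μ) :=
      hasSum_integral_iUnion hmQi hdisj hintB
    have hterm : ∀ i, (μ (Qi i)).toReal * (l * A) ≤ ∫ x in Qi i, w x ∂μ := by
      intro i
      rw [integral_eq_avg μ w (Qi i) (hposQi i) (hμQi_lt i)]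
      exact mul_le_mul_of_nonneg_left (havgQi i) ENNReal.toReal_nonneg
    calc (μ B).toReal * (l * A) = ∑' i, (μ (Qi i)).toReal * (l * A) := by
          rw [tsum_mul_right, htsumToReal]
      _ ≤ ∑' i, ∫ x in Qi i, w x ∂μ :=
          Summable.tsum_le_tsum hterm (hsumToReal.mul_right _) hsum.summable
      _ = ∫ x in B, w x ∂μ := hsum.tsum_eq
  have hBavg_ge : l * A ≤ avg μ w B := by
    have := integral_eq_avg μ w B hμB_pos hμB_lt
    rw [this] at hBint_ge
    exact le_of_mul_le_mul_left hBint_ge hμB0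
  -- Step 3 : μ(B) ≥ μ(Q)/(3 D l)
  have hμB_ge : (μ Q).toReal / (3 * D * l) ≤ (μ B).toReal := by
    have h1 : (1/3) * ((μ Q).toReal * A) ≤ (μ B).toReal * (D * l * A) := by
      calc (1/3) * ((μ Q).toReal * A)
          = (1/3) * ∫ x in Q, w x ∂μ := by
            rw [integral_eq_avg μ w Q hposQ hfinQ]
        _ ≤ ∫ x in B, w x ∂μ := hmass
        _ = (μ B).toReal * avg μ w B := integral_eq_avg μ w B hμB_pos hμB_lt
        _ ≤ (μ B).toReal * (D * l * A) :=
            mul_le_mul_of_nonneg_left havgB ENNReal.toReal_nonneg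
    rw [div_le_iff₀ (by positivity)]
    nlinarith [hA, hμB0]
  -- Step 4 : Jensen on B and conclusion 1
  have hjen : (avg μ w B) ^ p ≤ avg μ (fun x => w x ^ p) B :=
    avg_rpow_le μ w hw p hp B hμB_pos hμB_lt hintB hintpB
  have hlA0 : 0 ≤ l * A := by positivity
  have key : (1 / (3 * D)) * l ^ (p - 1) * (μ Q).toReal * A ^ p ≤
      ∫ x in Q, w x ^ p ∂μ := by
    have h1 : (l * A) ^ p ≤ (avg μ w B) ^ p :=
      Real.rpow_le_rpow hlA0 hBavg_ge hp0.le
    have h2 : (μ B).toReal * (l * A) ^ p ≤ ∫ x in B, w x ^ p ∂μ := by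
      rw [integral_eq_avg μ (fun x => w x ^ p) B hμB_pos hμB_lt]
      exact mul_le_mul_of_nonneg_left (h1.trans hjen) ENNReal.toReal_nonneg
    have h3 : ∫ x in B, w x ^ p ∂μ ≤ ∫ x in Q, w x ^ p ∂μ :=
      setIntegral_mono_set hintp
        (Filter.Eventually.of_forall fun x => hwp_nonneg x)
        (HasSubset.Subset.eventuallyLE hBQ)
    have h4 : (μ Q).toReal / (3 * D * l) * (l * A) ^ p ≤
        (μ B).toReal * (l * A) ^ p :=
      mul_le_mul_of_nonneg_right hμB_ge (Real.rpow_nonneg hlA0 p)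
    have h5 : (1 / (3 * D)) * l ^ (p - 1) * (μ Q).toReal * A ^ p =
        (μ Q).toReal / (3 * D * l) * (l * A) ^ p := by
      rw [Real.mul_rpow hl0.le hA0, Real.rpow_sub hl0, Real.rpow_one]
      field_simp
    linarith
  refine ⟨key, ?_⟩
  -- conclusion 2
  have havg_ge : (1 / (3 * D)) * l ^ (p - 1) * A ^ p ≤
      avg μ (fun x => w x ^ p) Q := by
    rw [show avg μ (fun x => w x ^ p) Q
        = ((μ Q).toReal)⁻¹ * ∫ x in Q, w x ^ p ∂μ from rfl]
    have heq : (1 / (3 * D)) * l ^ (p - 1) * A ^ p =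
        ((μ Q).toReal)⁻¹ * ((1 / (3 * D)) * l ^ (p - 1) * (μ Q).toReal * A ^ p) := by
      field_simp
    rw [heq]
    exact mul_le_mul_of_nonneg_left key (by positivity)
  have hc0 : (0:ℝ) ≤ (1 / (3 * D)) * l ^ (p - 1) := by positivity
  have := Real.rpow_le_rpow (by positivity) havg_ge (by positivity : (0:ℝ) ≤ 1/p)
  calc ((1 / (3 * D)) * l ^ (p - 1)) ^ (1 / p) * A
      = ((1 / (3 * D)) * l ^ (p - 1) * A ^ p) ^ (1 / p) := by
        rw [Real.mul_rpow hc0 (Real.rpow_nonneg hA0 p),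
          ← Real.rpow_mul hA0, mul_one_div, div_self hp0.ne', Real.rpow_one]
    _ ≤ (avg μ (fun x => w x ^ p) Q) ^ (1 / p) := this
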